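/- Let j ≥ 0 be an integer and let w : ℝ² → ℝ be continuously differentiable. Suppose u₀ ∈ P_j satisfies ∫_K (w − u₀) p dx dy = 0 for every p ∈ P_j; suppose for each m ∈ {1,2,3,4} that u_{b,m} is a polynomial of degree ≤ j+1 in the coordinate running along F_m with ∫_{F_m} (w − u_{b,m}) p ds = 0 for every univariate polynomial p of degree ≤ j+1; and suppose G ∈ BDM_{j+1}(K) satisfies ∫_K G·q dx dy = −∫_K u₀ (div q) dx dy + Σ_{m=1}^{4} ∫_{F_m} u_{b,m} (q·n_m) ds for every q ∈ BDM_{j+1}(K). Then ∫_K (G − ∇w)·q dx dy = 0 for every q ∈ BDM_{j+1}(K); that is, G is the L² projection of ∇w onto BDM_{j+1}(K). -/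

import Mathlib

open MeasureTheory MvPolynomial

noncomputable section

/-- Real polynomials in two variables. -/
abbrev Poly2 := MvPolynomial (Fin 2) ℝ

/-- Evaluate a two-variable polynomial at `(x, y)`. -/
def evalP (p : Poly2) (x y : ℝ) : ℝ := MvPolynomial.eval ![x, y] p

/-- `P_r`: total degree `≤ r`. -/
def memP (r : ℕ) (p : Poly2) : Prop := p.totalDegree ≤ r

/-- The divergence of a polynomial vector field. -/
def divP (q : Poly2 × Poly2) : Poly2 := pderiv 0 q.1 + pderiv 1 q.2

/-- The curl of a scalar polynomial: `curl φ = (−∂φ/∂y, ∂φ/∂x)`. -/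
def curlP (φ : Poly2) : Poly2 × Poly2 := (-(pderiv 1 φ), pderiv 0 φ)

/-- The Brezzi–Douglas–Marini space
`BDM_{j+1}(K) = (P_{j+1})² + span{curl (x^{j+2} y), curl (x y^{j+2})}`. -/
def memBDM (j : ℕ) (q : Poly2 × Poly2) : Prop :=
  ∃ (p₁ p₂ : Poly2) (a b : ℝ), memP (j+1) p₁ ∧ memP (j+1) p₂ ∧
    q.1 = p₁ + a • (curlP (X 0 ^ (j+2) * X 1)).1 + b • (curlP (X 0 * X 1 ^ (j+2))).1 ∧
    q.2 = p₂ + a • (curlP (X 0 ^ (j+2) * X 1)).2 + b • (curlP (X 0 * X 1 ^ (j+2))).2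

/-! ### Auxiliary lemmas -/

@[simp] lemma evalP_add (p q : Poly2) (x y : ℝ) : evalP (p+q) x y = evalP p x y + evalP q x y := by
  simp [evalP]
@[simp] lemma evalP_mul (p q : Poly2) (x y : ℝ) : evalP (p*q) x y = evalP p x y * evalP q x y := by
  simp [evalP]
@[simp] lemma evalP_smul (a : ℝ) (p : Poly2) (x y : ℝ) : evalP (a • p) x y = a * evalP p x y := by
  simp [evalP, MvPolynomial.smul_eval]
@[simp] lemma evalP_neg (p : Poly2) (x y : ℝ) : evalP (-p) x y = -evalP p x y := by simp [evalP]
@[simp] lemma evalP_C (a : ℝ) (x y : ℝ) : evalP (C a) x y = a := by simp [evalP]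
@[simp] lemma evalP_X0 (x y : ℝ) : evalP (X 0) x y = x := by simp [evalP]
@[simp] lemma evalP_X1 (x y : ℝ) : evalP (X 1) x y = y := by simp [evalP]
@[simp] lemma evalP_pow (p : Poly2) (n : ℕ) (x y : ℝ) : evalP (p^n) x y = evalP p x y ^ n := by
  simp [evalP]
@[simp] lemma evalP_zero (x y : ℝ) : evalP 0 x y = 0 := by simp [evalP]

/-- The fderiv CLM of a 2-variable polynomial. -/
def Dp (p : Poly2) (z : ℝ × ℝ) : ℝ × ℝ →L[ℝ] ℝ :=
  evalP (pderiv 0 p) z.1 z.2 • ContinuousLinearMap.fst ℝ ℝ ℝ +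
  evalP (pderiv 1 p) z.1 z.2 • ContinuousLinearMap.snd ℝ ℝ ℝ

lemma Dp_apply (p : Poly2) (z : ℝ × ℝ) (v : ℝ × ℝ) :
    Dp p z v = evalP (pderiv 0 p) z.1 z.2 * v.1 + evalP (pderiv 1 p) z.1 z.2 * v.2 := by
  simp [Dp]

lemma hasFDerivAt_evalP (p : Poly2) (z : ℝ × ℝ) :
    HasFDerivAt (fun z : ℝ × ℝ => evalP p z.1 z.2) (Dp p z) z := by
  induction p using MvPolynomial.induction_on with
  | C a =>
      have h1 : (fun z : ℝ × ℝ => evalP (MvPolynomial.C a) z.1 z.2) = fun _ => a := by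
        funext w; simp
      have h2 : Dp (MvPolynomial.C a) z = 0 := by
        apply ContinuousLinearMap.ext; intro v; simp [Dp_apply]
      rw [h1, h2]; exact hasFDerivAt_const a z
  | add p q hp hq =>
      have := hp.add hq
      convert this using 1 <;> try rfl
      · funext w; simp
      · apply ContinuousLinearMap.ext; intro v; simp [Dp_apply]; ring
  | mul_X p i hp =>
      have hxi : HasFDerivAt (fun z : ℝ × ℝ => evalP (X i) z.1 z.2)
          (if i = 0 then ContinuousLinearMap.fst ℝ ℝ ℝ else ContinuousLinearMap.snd ℝ ℝ ℝ) z := by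
        fin_cases i
        · simpa using hasFDerivAt_fst (p := z)
        · simpa using hasFDerivAt_snd (p := z)
      have := hp.mul hxi
      convert this using 1 <;> try rfl
      · funext w; simp
      · apply ContinuousLinearMap.ext; intro v
        fin_cases i <;>
          simp [Dp_apply, pderiv_mul, pderiv_X_self, pderiv_X_of_ne, Fin.ext_iff] <;> ring

lemma continuous_evalP (p : Poly2) : Continuous fun z : ℝ × ℝ => evalP p z.1 z.2 :=
  continuous_iff_continuousAt.2 fun z => (hasFDerivAt_evalP p z).continuousAt

lemma continuous_evalP_x (p : Poly2) (c : ℝ) : Continuous fun t : ℝ => evalP p c t := by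
  have h : (fun t : ℝ => evalP p c t)
      = (fun z : ℝ × ℝ => evalP p z.1 z.2) ∘ (fun t : ℝ => ((c, t) : ℝ × ℝ)) := rfl
  rw [h]
  exact (continuous_evalP p).comp (Continuous.prodMk continuous_const continuous_id)

lemma continuous_evalP_y (p : Poly2) (c : ℝ) : Continuous fun t : ℝ => evalP p t c := by
  have h : (fun t : ℝ => evalP p t c)
      = (fun z : ℝ × ℝ => evalP p z.1 z.2) ∘ (fun t : ℝ => ((t, c) : ℝ × ℝ)) := rfl
  rw [h]
  exact (continuous_evalP p).comp (Continuous.prodMk continuous_id continuous_const)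

lemma finsupp_sum_eq (s : Fin 2 →₀ ℕ) : (s.sum fun _ e => e) = s 0 + s 1 := by
  rw [Finsupp.sum_fintype _ _ (fun _ => rfl)]
  simp [Fin.sum_univ_two]

lemma memP_pderiv {r : ℕ} {p : Poly2} (h : memP (r+1) p) (i : Fin 2) : memP r (pderiv i p) := by
  unfold memP at *
  conv_lhs => rw [p.as_sum]
  rw [map_sum]
  refine le_trans (MvPolynomial.totalDegree_finset_sum _ _) (Finset.sup_le fun s hs => ?_)
  rw [pderiv_monomial]
  have hle : s 0 + s 1 ≤ r + 1 := by
    rw [← finsupp_sum_eq]; exact le_trans (MvPolynomial.le_totalDegree hs) h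
  by_cases hsi : s i = 0
  · rw [hsi]; simp
  · refine le_trans (MvPolynomial.totalDegree_monomial_le _ _) ?_
    set t : Fin 2 →₀ ℕ := s - Finsupp.single i 1 with ht
    have e0 : t 0 = s 0 - Finsupp.single i 1 0 := by rw [ht]; exact Finsupp.tsub_apply _ _ _
    have e1 : t 1 = s 1 - Finsupp.single i 1 1 := by rw [ht]; exact Finsupp.tsub_apply _ _ _
    have hsum : (t.sum fun _ => id) = t 0 + t 1 := by
      have := finsupp_sum_eq t
      simpa [Finsupp.sum] using this
    rw [hsum, e0, e1]
    fin_cases i <;> simp_all [Finsupp.single_apply] <;> omega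

/-- natDegree of `aeval g p` when each `g i` has degree ≤ 1. -/
lemma natDegree_aeval_le (g : Fin 2 → Polynomial ℝ) (hg : ∀ i, (g i).natDegree ≤ 1)
    (p : Poly2) : ((MvPolynomial.aeval g) p).natDegree ≤ p.totalDegree := by
  conv_lhs => rw [p.as_sum]
  rw [map_sum]
  refine Polynomial.natDegree_sum_le_of_forall_le _ _ fun s hs => ?_
  rw [MvPolynomial.aeval_monomial]
  refine le_trans Polynomial.natDegree_mul_le ?_
  have h1 : ((algebraMap ℝ (Polynomial ℝ)) (MvPolynomial.coeff s p)).natDegree = 0 :=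
    Polynomial.natDegree_C _
  rw [h1, zero_add]
  refine le_trans (Polynomial.natDegree_prod_le _ _) ?_
  have step : ∀ i ∈ s.support, ((fun i k => g i ^ k) i (s i)).natDegree ≤ s i := fun i _ => by
    simpa using le_trans Polynomial.natDegree_pow_le (Nat.mul_le_mul_left _ (hg i))
  calc ∑ i ∈ s.support, ((fun i k => g i ^ k) i (s i)).natDegree
      ≤ ∑ i ∈ s.support, s i := Finset.sum_le_sum step
    _ = s.sum fun _ e => e := by simp [Finsupp.sum]
    _ ≤ p.totalDegree := MvPolynomial.le_totalDegree hs

/-- Evaluation compatibility for traces: fixing x = c. -/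
lemma eval_trace_x (p : Poly2) (c t : ℝ) :
    ((MvPolynomial.aeval ![Polynomial.C c, Polynomial.X]) p).eval t = evalP p c t := by
  induction p using MvPolynomial.induction_on with
  | C a => simp
  | add p q hp hq => simp [hp, hq]
  | mul_X p i hp => fin_cases i <;> simp [hp]

lemma eval_trace_y (p : Poly2) (c t : ℝ) :
    ((MvPolynomial.aeval ![Polynomial.X, Polynomial.C c]) p).eval t = evalP p t c := by
  induction p using MvPolynomial.induction_on with
  | C a => simp
  | add p q hp hq => simp [hp, hq]
  | mul_X p i hp => fin_cases i <;> simp [hp]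

lemma pd0_phi1 (j : ℕ) : pderiv (0 : Fin 2) ((X 0 : Poly2) ^ (j+2) * X 1)
    = C ((j:ℝ)+2) * X 0 ^ (j+1) * X 1 := by
  rw [pderiv_mul, pderiv_X_of_ne (by decide : (1:Fin 2) ≠ 0), pderiv_pow, pderiv_X_self]
  rw [map_add, MvPolynomial.C_eq_coe_nat, show (C ((2:ℝ)) : Poly2) = 2 from map_ofNat _ 2]
  push_cast
  ring
lemma pd1_phi1 (j : ℕ) : pderiv (1 : Fin 2) ((X 0 : Poly2) ^ (j+2) * X 1) = X 0 ^ (j+2) := by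
  rw [pderiv_mul, pderiv_X_self, pderiv_pow, pderiv_X_of_ne (by decide : (0:Fin 2) ≠ 1)]
  ring
lemma pd0_phi2 (j : ℕ) : pderiv (0 : Fin 2) ((X 0 : Poly2) * X 1 ^ (j+2)) = X 1 ^ (j+2) := by
  rw [pderiv_mul, pderiv_X_self, pderiv_pow, pderiv_X_of_ne (by decide : (1:Fin 2) ≠ 0)]
  ring
lemma pd1_phi2 (j : ℕ) : pderiv (1 : Fin 2) ((X 0 : Poly2) * X 1 ^ (j+2))
    = C ((j:ℝ)+2) * X 0 * X 1 ^ (j+1) := by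
  rw [pderiv_mul, pderiv_X_of_ne (by decide : (0:Fin 2) ≠ 1), pderiv_pow, pderiv_X_self]
  rw [map_add, MvPolynomial.C_eq_coe_nat, show (C ((2:ℝ)) : Poly2) = 2 from map_ofNat _ 2]
  push_cast
  ring
lemma pderiv_natCast (i : Fin 2) (n : ℕ) : pderiv i ((n : Poly2)) = 0 := by
  rw [← MvPolynomial.C_eq_coe_nat]; exact pderiv_C
lemma pderiv_two (i : Fin 2) : pderiv i ((2 : Poly2)) = 0 := by
  rw [← map_ofNat C 2]; exact pderiv_C
lemma divP_curl1 (j : ℕ) : divP (curlP ((X 0 : Poly2) ^ (j+2) * X 1)) = 0 := by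
  simp only [divP, curlP, map_neg, pd1_phi1, pd0_phi1]
  simp only [pderiv_mul, pderiv_pow, pderiv_X_self, pderiv_C,
    pderiv_X_of_ne (by decide : (0:Fin 2) ≠ 1), pderiv_X_of_ne (by decide : (1:Fin 2) ≠ 0),
    map_add, MvPolynomial.C_eq_coe_nat, show (C ((2:ℝ)) : Poly2) = 2 from map_ofNat _ 2,
    pderiv_natCast, pderiv_two]
  push_cast
  ring
lemma divP_curl2 (j : ℕ) : divP (curlP ((X 0 : Poly2) * X 1 ^ (j+2))) = 0 := by
  simp only [divP, curlP, map_neg, pd1_phi2, pd0_phi2]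
  simp only [pderiv_mul, pderiv_pow, pderiv_X_self, pderiv_C,
    pderiv_X_of_ne (by decide : (0:Fin 2) ≠ 1), pderiv_X_of_ne (by decide : (1:Fin 2) ≠ 0),
    map_add, MvPolynomial.C_eq_coe_nat, show (C ((2:ℝ)) : Poly2) = 2 from map_ofNat _ 2,
    pderiv_natCast, pderiv_two]
  push_cast
  ring

lemma memP_divP {j : ℕ} {q : Poly2 × Poly2} (hq : memBDM j q) : memP j (divP q) := by
  obtain ⟨p₁, p₂, a, b, h1, h2, e1, e2⟩ := hq
  have c1 := divP_curl1 j
  have c2 := divP_curl2 j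
  simp only [divP, curlP, map_neg] at c1 c2
  have key : divP q = pderiv 0 p₁ + pderiv 1 p₂ := by
    simp only [divP, e1, e2, map_add, Derivation.map_smul, curlP, map_neg, smul_neg]
    linear_combination (norm := module) a • c1 + b • c2
  rw [key]
  exact le_trans (MvPolynomial.totalDegree_add _ _)
    (max_le (memP_pderiv h1 0) (memP_pderiv h2 1))

lemma trace1_natDegree {j : ℕ} {q : Poly2 × Poly2} (hq : memBDM j q) (c : ℝ) :
    ((MvPolynomial.aeval ![Polynomial.C c, Polynomial.X]) q.1).natDegree ≤ j + 1 := by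
  obtain ⟨p₁, p₂, a, b, h1, h2, e1, e2⟩ := hq
  have hg : ∀ i : Fin 2, ((![Polynomial.C c, Polynomial.X] : Fin 2 → Polynomial ℝ) i).natDegree ≤ 1 := by
    intro i; fin_cases i <;> simp
  rw [e1]
  simp only [curlP, pd1_phi1, pd1_phi2, map_add, _root_.map_smul, map_neg, map_mul, map_pow,
    MvPolynomial.aeval_X, MvPolynomial.aeval_C, Matrix.cons_val_zero, Matrix.cons_val_one,
    Matrix.head_cons]
  refine le_trans (Polynomial.natDegree_add_le _ _) (max_le
    (le_trans (Polynomial.natDegree_add_le _ _) (max_le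
      (le_trans (natDegree_aeval_le _ hg p₁) h1) ?_)) ?_)
  · exact le_trans (Polynomial.natDegree_smul_le _ _) (by compute_degree <;> omega)
  · exact le_trans (Polynomial.natDegree_smul_le _ _) (by compute_degree <;> omega)

lemma trace2_natDegree {j : ℕ} {q : Poly2 × Poly2} (hq : memBDM j q) (c : ℝ) :
    ((MvPolynomial.aeval ![Polynomial.X, Polynomial.C c]) q.2).natDegree ≤ j + 1 := by
  obtain ⟨p₁, p₂, a, b, h1, h2, e1, e2⟩ := hq
  have hg : ∀ i : Fin 2, ((![Polynomial.X, Polynomial.C c] : Fin 2 → Polynomial ℝ) i).natDegree ≤ 1 := by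
    intro i; fin_cases i <;> simp
  rw [e2]
  simp only [curlP, pd0_phi1, pd0_phi2, map_add, _root_.map_smul, map_neg, map_mul, map_pow,
    MvPolynomial.aeval_X, MvPolynomial.aeval_C, Matrix.cons_val_zero, Matrix.cons_val_one,
    Matrix.head_cons]
  refine le_trans (Polynomial.natDegree_add_le _ _) (max_le
    (le_trans (Polynomial.natDegree_add_le _ _) (max_le
      (le_trans (natDegree_aeval_le _ hg p₂) h2) ?_)) ?_)
  · exact le_trans (Polynomial.natDegree_smul_le _ _) (by compute_degree <;> omega)
  · exact le_trans (Polynomial.natDegree_smul_le _ _) (by compute_degree <;> omega)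

theorem statement3 (j : ℕ) (x₀ x₁ y₀ y₁ : ℝ) (hx : x₀ < x₁) (hy : y₀ < y₁)
    (w : ℝ × ℝ → ℝ) (hw : ContDiff ℝ 1 w)
    (u₀ : Poly2) (hu₀ : memP j u₀)
    (hu₀proj : ∀ p : Poly2, memP j p →
      (∫ z in Set.Icc x₀ x₁ ×ˢ Set.Icc y₀ y₁, (w z - evalP u₀ z.1 z.2) * evalP p z.1 z.2) = 0)
    (ub₁ ub₂ ub₃ ub₄ : Polynomial ℝ)
    (hb₁ : ub₁.natDegree ≤ j + 1) (hb₂ : ub₂.natDegree ≤ j + 1)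
    (hb₃ : ub₃.natDegree ≤ j + 1) (hb₄ : ub₄.natDegree ≤ j + 1)
    (hub₁ : ∀ p : Polynomial ℝ, p.natDegree ≤ j + 1 →
      (∫ y in y₀..y₁, (w (x₀, y) - ub₁.eval y) * p.eval y) = 0)
    (hub₂ : ∀ p : Polynomial ℝ, p.natDegree ≤ j + 1 →
      (∫ y in y₀..y₁, (w (x₁, y) - ub₂.eval y) * p.eval y) = 0)
    (hub₃ : ∀ p : Polynomial ℝ, p.natDegree ≤ j + 1 →
      (∫ x in x₀..x₁, (w (x, y₀) - ub₃.eval x) * p.eval x) = 0)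
    (hub₄ : ∀ p : Polynomial ℝ, p.natDegree ≤ j + 1 →
      (∫ x in x₀..x₁, (w (x, y₁) - ub₄.eval x) * p.eval x) = 0)
    (G : Poly2 × Poly2) (hG : memBDM j G)
    (hGdef : ∀ q : Poly2 × Poly2, memBDM j q →
      (∫ z in Set.Icc x₀ x₁ ×ˢ Set.Icc y₀ y₁,
        (evalP G.1 z.1 z.2 * evalP q.1 z.1 z.2 + evalP G.2 z.1 z.2 * evalP q.2 z.1 z.2))
      = -(∫ z in Set.Icc x₀ x₁ ×ˢ Set.Icc y₀ y₁, evalP u₀ z.1 z.2 * evalP (divP q) z.1 z.2)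
        + ((∫ y in y₀..y₁, ub₁.eval y * (-(evalP q.1 x₀ y)))
          + (∫ y in y₀..y₁, ub₂.eval y * evalP q.1 x₁ y)
          + (∫ x in x₀..x₁, ub₃.eval x * (-(evalP q.2 x y₀)))
          + (∫ x in x₀..x₁, ub₄.eval x * evalP q.2 x y₁))) :
    ∀ q : Poly2 × Poly2, memBDM j q →
      (∫ z in Set.Icc x₀ x₁ ×ˢ Set.Icc y₀ y₁,
        ((evalP G.1 z.1 z.2 - fderiv ℝ w z (1, 0)) * evalP q.1 z.1 z.2
          + (evalP G.2 z.1 z.2 - fderiv ℝ w z (0, 1)) * evalP q.2 z.1 z.2)) = 0 := by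
  intro q hq
  have hwc : Continuous w := hw.continuous
  have hdwc : Continuous (fderiv ℝ w) := hw.continuous_fderiv one_ne_zero
  have hwd : ∀ z, HasFDerivAt w (fderiv ℝ w z) z := fun z =>
    (hw.differentiable one_ne_zero z).hasFDerivAt
  have hIcc : (Set.Icc x₀ x₁ ×ˢ Set.Icc y₀ y₁ : Set (ℝ × ℝ)) = Set.Icc (x₀, y₀) (x₁, y₁) :=
    Set.Icc_prod_Icc x₀ x₁ y₀ y₁
  have hInt : ∀ h : ℝ × ℝ → ℝ, Continuous h →
      IntegrableOn h (Set.Icc x₀ x₁ ×ˢ Set.Icc y₀ y₁) := fun h hh => by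
    rw [hIcc]; exact hh.continuousOn.integrableOn_compact isCompact_Icc
  -- continuity facts
  have hc1 : Continuous fun z : ℝ × ℝ => evalP q.1 z.1 z.2 := continuous_evalP q.1
  have hc2 : Continuous fun z : ℝ × ℝ => evalP q.2 z.1 z.2 := continuous_evalP q.2
  have hcd : Continuous fun z : ℝ × ℝ => evalP (divP q) z.1 z.2 := continuous_evalP (divP q)
  have hcw1 : Continuous fun z : ℝ × ℝ => fderiv ℝ w z (1, 0) :=
    hdwc.clm_apply continuous_const
  have hcw2 : Continuous fun z : ℝ × ℝ => fderiv ℝ w z (0, 1) :=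
    hdwc.clm_apply continuous_const
  -- Green's theorem
  have hf' : ∀ z : ℝ × ℝ, HasFDerivAt (fun z : ℝ × ℝ => w z * evalP q.1 z.1 z.2)
      (w z • Dp q.1 z + evalP q.1 z.1 z.2 • fderiv ℝ w z) z := fun z =>
    (hwd z).mul (hasFDerivAt_evalP q.1 z)
  have hg' : ∀ z : ℝ × ℝ, HasFDerivAt (fun z : ℝ × ℝ => w z * evalP q.2 z.1 z.2)
      (w z • Dp q.2 z + evalP q.2 z.1 z.2 • fderiv ℝ w z) z := fun z =>
    (hwd z).mul (hasFDerivAt_evalP q.2 z)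
  have hIval : ∀ z : ℝ × ℝ,
      (w z • Dp q.1 z + evalP q.1 z.1 z.2 • fderiv ℝ w z) (1, 0)
      + (w z • Dp q.2 z + evalP q.2 z.1 z.2 • fderiv ℝ w z) (0, 1)
      = fderiv ℝ w z (1, 0) * evalP q.1 z.1 z.2 + fderiv ℝ w z (0, 1) * evalP q.2 z.1 z.2
        + w z * evalP (divP q) z.1 z.2 := by
    intro z
    simp only [ContinuousLinearMap.add_apply, ContinuousLinearMap.coe_smul',
      Pi.smul_apply, Dp_apply, smul_eq_mul, divP, evalP_add]
    ring
  have hIcont : Continuous fun z : ℝ × ℝ =>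
      fderiv ℝ w z (1, 0) * evalP q.1 z.1 z.2 + fderiv ℝ w z (0, 1) * evalP q.2 z.1 z.2
        + w z * evalP (divP q) z.1 z.2 :=
    ((hcw1.mul hc1).add (hcw2.mul hc2)).add (hwc.mul hcd)
  have green := integral_divergence_prod_Icc_of_hasFDerivAt_off_countable_of_le
    (fun z : ℝ × ℝ => w z * evalP q.1 z.1 z.2) (fun z : ℝ × ℝ => w z * evalP q.2 z.1 z.2)
    (fun z : ℝ × ℝ => w z • Dp q.1 z + evalP q.1 z.1 z.2 • fderiv ℝ w z)
    (fun z : ℝ × ℝ => w z • Dp q.2 z + evalP q.2 z.1 z.2 • fderiv ℝ w z)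
    (x₀, y₀) (x₁, y₁) ⟨hx.le, hy.le⟩ ∅ Set.countable_empty
    (Continuous.continuousOn (hwc.mul hc1)) (Continuous.continuousOn (hwc.mul hc2))
    (fun z _ => hf' z) (fun z _ => hg' z)
    (by
      have e : (fun z : ℝ × ℝ =>
          (w z • Dp q.1 z + evalP q.1 z.1 z.2 • fderiv ℝ w z) (1, 0)
          + (w z • Dp q.2 z + evalP q.2 z.1 z.2 • fderiv ℝ w z) (0, 1))
          = fun z : ℝ × ℝ =>
            fderiv ℝ w z (1, 0) * evalP q.1 z.1 z.2 + fderiv ℝ w z (0, 1) * evalP q.2 z.1 z.2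
              + w z * evalP (divP q) z.1 z.2 := funext hIval
      rw [e, ← hIcc]
      exact hInt _ hIcont)
  simp only [hIval] at green
  rw [← hIcc] at green
  -- green : ∫ z in K, (∂₁w Q1 + ∂₂w Q2 + w divq)
  --   = (((∫ x, w(x,y₁) Q2) - (∫ x, w(x,y₀) Q2)) + ∫ y, w(x₁,y) Q1) - ∫ y, w(x₀,y) Q1
  -- integrability of the various volume integrands
  have i1 : IntegrableOn (fun z : ℝ × ℝ => fderiv ℝ w z (1, 0) * evalP q.1 z.1 z.2)
      (Set.Icc x₀ x₁ ×ˢ Set.Icc y₀ y₁) := hInt _ (hcw1.mul hc1)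
  have i2 : IntegrableOn (fun z : ℝ × ℝ => fderiv ℝ w z (0, 1) * evalP q.2 z.1 z.2)
      (Set.Icc x₀ x₁ ×ˢ Set.Icc y₀ y₁) := hInt _ (hcw2.mul hc2)
  have i3 : IntegrableOn (fun z : ℝ × ℝ => w z * evalP (divP q) z.1 z.2)
      (Set.Icc x₀ x₁ ×ˢ Set.Icc y₀ y₁) := hInt _ (hwc.mul hcd)
  have i4 : IntegrableOn (fun z : ℝ × ℝ => evalP u₀ z.1 z.2 * evalP (divP q) z.1 z.2)
      (Set.Icc x₀ x₁ ×ˢ Set.Icc y₀ y₁) := hInt _ ((continuous_evalP u₀).mul hcd)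
  have i5 : IntegrableOn (fun z : ℝ × ℝ =>
      evalP G.1 z.1 z.2 * evalP q.1 z.1 z.2 + evalP G.2 z.1 z.2 * evalP q.2 z.1 z.2)
      (Set.Icc x₀ x₁ ×ˢ Set.Icc y₀ y₁) :=
    hInt _ (((continuous_evalP G.1).mul hc1).add ((continuous_evalP G.2).mul hc2))
  have i12 : IntegrableOn (fun z : ℝ × ℝ =>
      fderiv ℝ w z (1, 0) * evalP q.1 z.1 z.2 + fderiv ℝ w z (0, 1) * evalP q.2 z.1 z.2)
      (Set.Icc x₀ x₁ ×ˢ Set.Icc y₀ y₁) := hInt _ ((hcw1.mul hc1).add (hcw2.mul hc2))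
  -- split off the w * div q part of Green's identity
  rw [MeasureTheory.integral_add i12 i3] at green
  -- volume projection property
  have hu := hu₀proj (divP q) (memP_divP hq)
  have eu : (fun z : ℝ × ℝ => (w z - evalP u₀ z.1 z.2) * evalP (divP q) z.1 z.2)
      = fun z : ℝ × ℝ => w z * evalP (divP q) z.1 z.2
        - evalP u₀ z.1 z.2 * evalP (divP q) z.1 z.2 := by funext z; ring
  rw [eu, MeasureTheory.integral_sub i3 i4] at hu
  -- edge projection properties
  have cwx₀ : Continuous fun t : ℝ => w (x₀, t) :=
    hwc.comp (Continuous.prodMk continuous_const continuous_id)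
  have cwx₁ : Continuous fun t : ℝ => w (x₁, t) :=
    hwc.comp (Continuous.prodMk continuous_const continuous_id)
  have cwy₀ : Continuous fun t : ℝ => w (t, y₀) :=
    hwc.comp (Continuous.prodMk continuous_id continuous_const)
  have cwy₁ : Continuous fun t : ℝ => w (t, y₁) :=
    hwc.comp (Continuous.prodMk continuous_id continuous_const)
  have tr1 := hub₁ _ (trace1_natDegree hq x₀)
  simp only [eval_trace_x] at tr1
  have e1 : (fun t : ℝ => (w (x₀, t) - ub₁.eval t) * evalP q.1 x₀ t)
      = fun t : ℝ => w (x₀, t) * evalP q.1 x₀ t - ub₁.eval t * evalP q.1 x₀ t := by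
    funext t; ring
  rw [e1, intervalIntegral.integral_sub (f := fun t => w (x₀, t) * evalP q.1 x₀ t) (g := fun t => ub₁.eval t * evalP q.1 x₀ t)
    ((cwx₀.mul (continuous_evalP_x q.1 x₀)).intervalIntegrable _ _)
    ((ub₁.continuous.mul (continuous_evalP_x q.1 x₀)).intervalIntegrable _ _)] at tr1
  have tr2 := hub₂ _ (trace1_natDegree hq x₁)
  simp only [eval_trace_x] at tr2
  have e2 : (fun t : ℝ => (w (x₁, t) - ub₂.eval t) * evalP q.1 x₁ t)
      = fun t : ℝ => w (x₁, t) * evalP q.1 x₁ t - ub₂.eval t * evalP q.1 x₁ t := by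
    funext t; ring
  rw [e2, intervalIntegral.integral_sub (f := fun t => w (x₁, t) * evalP q.1 x₁ t) (g := fun t => ub₂.eval t * evalP q.1 x₁ t)
    ((cwx₁.mul (continuous_evalP_x q.1 x₁)).intervalIntegrable _ _)
    ((ub₂.continuous.mul (continuous_evalP_x q.1 x₁)).intervalIntegrable _ _)] at tr2
  have tr3 := hub₃ _ (trace2_natDegree hq y₀)
  simp only [eval_trace_y] at tr3
  have e3 : (fun t : ℝ => (w (t, y₀) - ub₃.eval t) * evalP q.2 t y₀)
      = fun t : ℝ => w (t, y₀) * evalP q.2 t y₀ - ub₃.eval t * evalP q.2 t y₀ := by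
    funext t; ring
  rw [e3, intervalIntegral.integral_sub (f := fun t => w (t, y₀) * evalP q.2 t y₀) (g := fun t => ub₃.eval t * evalP q.2 t y₀)
    ((cwy₀.mul (continuous_evalP_y q.2 y₀)).intervalIntegrable _ _)
    ((ub₃.continuous.mul (continuous_evalP_y q.2 y₀)).intervalIntegrable _ _)] at tr3
  have tr4 := hub₄ _ (trace2_natDegree hq y₁)
  simp only [eval_trace_y] at tr4
  have e4 : (fun t : ℝ => (w (t, y₁) - ub₄.eval t) * evalP q.2 t y₁)
      = fun t : ℝ => w (t, y₁) * evalP q.2 t y₁ - ub₄.eval t * evalP q.2 t y₁ := by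
    funext t; ring
  rw [e4, intervalIntegral.integral_sub (f := fun t => w (t, y₁) * evalP q.2 t y₁) (g := fun t => ub₄.eval t * evalP q.2 t y₁)
    ((cwy₁.mul (continuous_evalP_y q.2 y₁)).intervalIntegrable _ _)
    ((ub₄.continuous.mul (continuous_evalP_y q.2 y₁)).intervalIntegrable _ _)] at tr4
  -- the defining property of G, with the sign conventions unfolded
  have hGq := hGdef q hq
  have en1 : (fun t : ℝ => ub₁.eval t * (-(evalP q.1 x₀ t)))
      = fun t : ℝ => -(ub₁.eval t * evalP q.1 x₀ t) := by funext t; ring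
  have en3 : (fun t : ℝ => ub₃.eval t * (-(evalP q.2 t y₀)))
      = fun t : ℝ => -(ub₃.eval t * evalP q.2 t y₀) := by funext t; ring
  rw [en1, en3, intervalIntegral.integral_neg, intervalIntegral.integral_neg] at hGq
  -- rewrite the goal
  have etarget : (fun z : ℝ × ℝ =>
      (evalP G.1 z.1 z.2 - fderiv ℝ w z (1, 0)) * evalP q.1 z.1 z.2
        + (evalP G.2 z.1 z.2 - fderiv ℝ w z (0, 1)) * evalP q.2 z.1 z.2)
      = fun z : ℝ × ℝ =>
        (evalP G.1 z.1 z.2 * evalP q.1 z.1 z.2 + evalP G.2 z.1 z.2 * evalP q.2 z.1 z.2)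
        - (fderiv ℝ w z (1, 0) * evalP q.1 z.1 z.2 + fderiv ℝ w z (0, 1) * evalP q.2 z.1 z.2) := by
    funext z; ring
  rw [etarget, MeasureTheory.integral_sub i5 i12]
  linarith [green, hu, tr1, tr2, tr3, tr4, hGq]
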